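/- Let GU₂ = { X ∈ M₂(ℂ) : X X* = x·I for some x ≠ 0 } be the group of unitary similitudes, acting on the right on N = M₂(ℂ) \ {0}. For X ∈ N with det X = 0, X can be written as X = v·wᵀ with v, w ∈ ℂ² \ {0}, and the map sending the GU₂-orbit of X to the line [v] ∈ ℂP¹ is a well-defined bijection from { [X] ∈ N/GU₂ : det X = 0 } onto ℂP¹. -/

import Mathlib

open Matrix

/-- The group of unitary similitudes: `X X* = x·I` for some `x ≠ 0`. -/
def GU2 : Set (Matrix (Fin 2) (Fin 2) ℂ) :=
  {g | ∃ x : ℂ, x ≠ 0 ∧ g * star g = x • (1 : Matrix (Fin 2) (Fin 2) ℂ)}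

noncomputable def Mu (u : Fin 2 → ℂ) : Matrix (Fin 2) (Fin 2) ℂ :=
  !![u 0, u 1; -(starRingEnd ℂ (u 1)), starRingEnd ℂ (u 0)]

lemma Mu_mul_star (u : Fin 2 → ℂ) :
    Mu u * star (Mu u) = (u 0 * starRingEnd ℂ (u 0) + u 1 * starRingEnd ℂ (u 1)) • 1 := by
  ext i j
  fin_cases i <;> fin_cases j <;>
    simp [Mu, Matrix.mul_apply, Fin.sum_univ_two, Matrix.star_apply, Matrix.one_apply,
      Matrix.smul_apply] <;> ring

lemma star_Mu_mul (u : Fin 2 → ℂ) :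
    star (Mu u) * Mu u = (u 0 * starRingEnd ℂ (u 0) + u 1 * starRingEnd ℂ (u 1)) • 1 := by
  ext i j
  fin_cases i <;> fin_cases j <;>
    simp [Mu, Matrix.mul_apply, Fin.sum_univ_two, Matrix.star_apply, Matrix.one_apply,
      Matrix.smul_apply] <;> ring

lemma cne (u : Fin 2 → ℂ) (hu : u ≠ 0) :
    u 0 * starRingEnd ℂ (u 0) + u 1 * starRingEnd ℂ (u 1) ≠ 0 := by
  intro h
  rw [Complex.mul_conj, Complex.mul_conj, ← Complex.ofReal_add] at h
  have h2 : Complex.normSq (u 0) + Complex.normSq (u 1) = 0 := by exact_mod_cast h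
  have h0 : Complex.normSq (u 0) = 0 ∧ Complex.normSq (u 1) = 0 := by
    constructor <;> nlinarith [Complex.normSq_nonneg (u 0), Complex.normSq_nonneg (u 1)]
  apply hu
  funext i
  fin_cases i <;> simp [Complex.normSq_eq_zero.mp h0.1, Complex.normSq_eq_zero.mp h0.2]

lemma gu2_mul {g h : Matrix (Fin 2) (Fin 2) ℂ} (hg : g ∈ GU2) (hh : h ∈ GU2) :
    g * h ∈ GU2 := by
  obtain ⟨x, hx, hgx⟩ := hg
  obtain ⟨y, hy, hhy⟩ := hh
  refine ⟨x * y, mul_ne_zero hx hy, ?_⟩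
  rw [Matrix.star_mul,
    show g * h * (star h * star g) = g * (h * star h) * star g by simp only [Matrix.mul_assoc],
    hhy]
  rw [Matrix.mul_smul, Matrix.smul_mul, Matrix.mul_one, hgx, smul_smul, mul_comm]

lemma gu2_smul {g : Matrix (Fin 2) (Fin 2) ℂ} {c : ℂ} (hc : c ≠ 0) (hg : g ∈ GU2) :
    c • g ∈ GU2 := by
  obtain ⟨x, hx, hgx⟩ := hg
  refine ⟨c * starRingEnd ℂ c * x, by
    simp [mul_ne_zero, hc, hx, (by simpa using hc : starRingEnd ℂ c ≠ 0)], ?_⟩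
  rw [star_smul, Matrix.smul_mul, Matrix.mul_smul, hgx, smul_smul, smul_smul]
  rfl

lemma Mu_mem {u : Fin 2 → ℂ} (hu : u ≠ 0) : Mu u ∈ GU2 :=
  ⟨_, cne u hu, Mu_mul_star u⟩

lemma star_Mu_mem {u : Fin 2 → ℂ} (hu : u ≠ 0) : star (Mu u) ∈ GU2 :=
  ⟨_, cne u hu, by rw [star_star]; exact star_Mu_mul u⟩

lemma vecMul_star_Mu (u : Fin 2 → ℂ) :
    u ᵥ* star (Mu u) = (u 0 * starRingEnd ℂ (u 0) + u 1 * starRingEnd ℂ (u 1)) • ![1, 0] := by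
  funext j
  fin_cases j <;>
    simp [Mu, Matrix.vecMul, dotProduct, Fin.sum_univ_two, Matrix.star_apply] <;> ring

lemma e0_vecMul_Mu (z : Fin 2 → ℂ) : ![(1:ℂ), 0] ᵥ* Mu z = z := by
  funext j
  fin_cases j <;> simp [Mu, Matrix.vecMul, dotProduct, Fin.sum_univ_two]

lemma vecMul_smulMat (c : ℂ) (w : Fin 2 → ℂ) (M : Matrix (Fin 2) (Fin 2) ℂ) :
    w ᵥ* (c • M) = c • (w ᵥ* M) := by
  funext j
  simp [Matrix.vecMul, dotProduct, Fin.sum_univ_two, Finset.mul_sum]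
  ring

lemma vecMulVec_mul' (v w : Fin 2 → ℂ) (g : Matrix (Fin 2) (Fin 2) ℂ) :
    vecMulVec v w * g = vecMulVec v (w ᵥ* g) := by
  ext i j
  simp only [vecMulVec_apply, Matrix.mul_apply, Matrix.vecMul, dotProduct,
    Fin.sum_univ_two]
  ring

/-- Every nonzero `X ∈ M₂(ℂ)` with `det X = 0` factors as an outer
product `X = v·wᵀ` of nonzero vectors, and two such matrices lie in the same
right `GU₂`-orbit iff their left factors span the same line in `ℂP¹`; hence
`[X] ↦ [v]` is a well-defined bijection from the determinant-zero orbits onto `ℂP¹`. -/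
theorem stmt_12 :
    (∀ X : Matrix (Fin 2) (Fin 2) ℂ, X ≠ 0 → X.det = 0 →
      ∃ v w : Fin 2 → ℂ, v ≠ 0 ∧ w ≠ 0 ∧ X = Matrix.vecMulVec v w) ∧
    (∀ (v w v' w' : Fin 2 → ℂ) (hv : v ≠ 0) (_ : w ≠ 0) (hv' : v' ≠ 0) (_ : w' ≠ 0),
      (∃ g ∈ GU2, Matrix.vecMulVec v w = Matrix.vecMulVec v' w' * g) ↔
        Projectivization.mk ℂ v hv = Projectivization.mk ℂ v' hv') := by
  constructor
  · intro X hX hdet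
    rw [Matrix.det_fin_two] at hdet
    by_cases h0 : X 0 = 0
    · have h1 : X 1 ≠ 0 := by
        intro h1
        apply hX
        ext i j
        fin_cases i
        · simpa using congrFun h0 j
        · simpa using congrFun h1 j
      refine ⟨![0, 1], X 1, ?_, h1, ?_⟩
      · intro h; simpa using congrFun h 1
      · ext i j
        fin_cases i
        · simpa [vecMulVec_apply] using congrFun h0 j
        · simp [vecMulVec_apply]
    · rcases eq_or_ne (X 0 0) 0 with ha | ha
      · have hb : X 0 1 ≠ 0 := by
          intro hb; apply h0; funext j; fin_cases j <;> simpa [ha]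
        have hc : X 1 0 = 0 := by
          have := hdet; rw [ha] at this
          have : X 0 1 * X 1 0 = 0 := by linear_combination -this
          exact (mul_eq_zero.mp this).resolve_left hb
        refine ⟨![1, X 1 1 / X 0 1], X 0, ?_, h0, ?_⟩
        · intro h; simpa using congrFun h 0
        · ext i j
          fin_cases i <;> fin_cases j <;>
            simp [vecMulVec_apply, ha, hc] <;> field_simp
      · refine ⟨![1, X 1 0 / X 0 0], X 0, ?_, h0, ?_⟩
        · intro h; simpa using congrFun h 0
        · ext i j
          fin_cases i <;> fin_cases j <;> simp [vecMulVec_apply]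
          · field_simp
          · field_simp
            linear_combination hdet
  · intro v w v' w' hv hw hv' hw'
    constructor
    · rintro ⟨g, hg, heq⟩
      rw [vecMulVec_mul'] at heq
      set u := w' ᵥ* g with hu
      obtain ⟨i0, hi0⟩ := Function.ne_iff.mp hv
      obtain ⟨j0, hj0⟩ := Function.ne_iff.mp hw
      simp only [Pi.zero_apply] at hi0 hj0
      have key : ∀ i, v i * w j0 = v' i * u j0 := fun i => by
        have := congrFun (congrFun heq i) j0
        simpa [vecMulVec_apply] using this
      have hu0 : u j0 ≠ 0 := by
        intro h
        exact (mul_ne_zero hi0 hj0) (by rw [key i0, h, mul_zero])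
      have hc : u j0 / w j0 ≠ 0 := div_ne_zero hu0 hj0
      rw [Projectivization.mk_eq_mk_iff]
      refine ⟨Units.mk0 _ hc, ?_⟩
      funext i
      have := key i
      simp only [Units.smul_def, Units.val_mk0, Pi.smul_apply, smul_eq_mul]
      field_simp
      linear_combination -this
    · intro h
      rw [Projectivization.mk_eq_mk_iff] at h
      obtain ⟨a, ha⟩ := h
      set z : Fin 2 → ℂ := (a : ℂ) • w with hz
      have hzne : z ≠ 0 := smul_ne_zero (Units.ne_zero a) hw
      set c : ℂ := w' 0 * starRingEnd ℂ (w' 0) + w' 1 * starRingEnd ℂ (w' 1) with hcdef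
      have hcne : c ≠ 0 := cne w' hw'
      refine ⟨c⁻¹ • (star (Mu w') * Mu z),
        gu2_smul (inv_ne_zero hcne) (gu2_mul (star_Mu_mem hw') (Mu_mem hzne)), ?_⟩
      rw [vecMulVec_mul']
      have h1 : w' ᵥ* (c⁻¹ • (star (Mu w') * Mu z)) = z := by
        rw [vecMul_smulMat, ← Matrix.vecMul_vecMul, vecMul_star_Mu, ← hcdef,
          Matrix.smul_vecMul, e0_vecMul_Mu, smul_smul, inv_mul_cancel₀ hcne, one_smul]
      rw [h1]
      ext i j
      simp only [vecMulVec_apply, hz, Pi.smul_apply, smul_eq_mul]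
      rw [← congrFun ha i]
      simp [Units.smul_def]
      ring
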